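/- Let A be an m×n real matrix, b ∈ ℝ^m, v : ℕ → ℝ^m, w z : ℕ → ℝ^n. Let H : ℕ → (n×n real matrices) and x : ℕ → ℝ^n satisfy, for every k with 1 ≤ k ≤ i: p k = (H k)ᵀ *ᵥ (z k), δ k = w k ⬝ᵥ (H k *ᵥ (Aᵀ *ᵥ v k)) ≠ 0, z k ⬝ᵥ (H k *ᵥ (Aᵀ *ᵥ v k)) ≠ 0, H (k+1) = H k - (1/δ k) • vecMulVec (H k *ᵥ (Aᵀ *ᵥ v k)) ((H k)ᵀ *ᵥ w k), and x (k+1) = x k - ((v k ⬝ᵥ (A *ᵥ x k - b)) / (v k ⬝ᵥ (A *ᵥ p k))) • p k. Then for every j with 1 ≤ j ≤ i, (v j) ⬝ᵥ (A *ᵥ x (i+1) - b) = 0, i.e. x (i+1) solves the scaled system Vᵢᵀ A x = Vᵢᵀ b. -/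

import Mathlib

open Matrix

private lemma vecMulVec_mulVec' {n : ℕ} (a c u : Fin n → ℝ) :
    vecMulVec a c *ᵥ u = (c ⬝ᵥ u) • a := by
  funext j
  simp [vecMulVec, mulVec, dotProduct, Finset.mul_sum, mul_comm, mul_left_comm]

private lemma dot_swap {m n : ℕ} (A : Matrix (Fin m) (Fin n) ℝ)
    (v : Fin m → ℝ) (u : Fin n → ℝ) :
    v ⬝ᵥ (A *ᵥ u) = (Aᵀ *ᵥ v) ⬝ᵥ u := by
  rw [dotProduct_mulVec, mulVec_transpose]

theorem abs_iterate_solves_scaled_system {m n : ℕ} (i : ℕ)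
    (A : Matrix (Fin m) (Fin n) ℝ) (b : Fin m → ℝ)
    (v : ℕ → Fin m → ℝ) (w z : ℕ → Fin n → ℝ)
    (H : ℕ → Matrix (Fin n) (Fin n) ℝ)
    (p : ℕ → Fin n → ℝ) (x : ℕ → Fin n → ℝ)
    (hrec : ∀ k, 1 ≤ k → k ≤ i →
      p k = (H k)ᵀ *ᵥ z k ∧
      w k ⬝ᵥ (H k *ᵥ (Aᵀ *ᵥ v k)) ≠ 0 ∧
      z k ⬝ᵥ (H k *ᵥ (Aᵀ *ᵥ v k)) ≠ 0 ∧
      H (k + 1) = H k - (1 / (w k ⬝ᵥ (H k *ᵥ (Aᵀ *ᵥ v k)))) •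
        vecMulVec (H k *ᵥ (Aᵀ *ᵥ v k)) ((H k)ᵀ *ᵥ w k) ∧
      x (k + 1) = x k -
        ((v k ⬝ᵥ (A *ᵥ x k - b)) / (v k ⬝ᵥ (A *ᵥ p k))) • p k) :
    ∀ j, 1 ≤ j → j ≤ i → v j ⬝ᵥ (A *ᵥ x (i + 1) - b) = 0 := by
  -- key invariant: H l annihilates Aᵀ v j for l > j
  have key : ∀ j, 1 ≤ j → j ≤ i → ∀ l, j < l → l ≤ i + 1 →
      H l *ᵥ (Aᵀ *ᵥ v j) = 0 := by
    intro j hj1 hji l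
    induction l with
    | zero => omega
    | succ l ih =>
      intro hjl hli
      rcases Nat.lt_or_ge j l with h | h
      · have hl1 : 1 ≤ l := by omega
        have hli' : l ≤ i := by omega
        obtain ⟨_, hδ, _, hH, _⟩ := hrec l hl1 hli'
        have h0 := ih h (by omega)
        rw [hH]
        rw [sub_mulVec, h0, smul_mulVec, vecMulVec_mulVec']
        have : ((H l)ᵀ *ᵥ w l) ⬝ᵥ (Aᵀ *ᵥ v j) = w l ⬝ᵥ (H l *ᵥ (Aᵀ *ᵥ v j)) := by
          rw [← dot_swap]
        rw [this, h0]
        simp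
      · have hjl' : j = l := by omega
        subst hjl'
        obtain ⟨_, hδ, _, hH, _⟩ := hrec j hj1 (by omega)
        rw [hH]
        rw [sub_mulVec, smul_mulVec, vecMulVec_mulVec']
        have : ((H j)ᵀ *ᵥ w j) ⬝ᵥ (Aᵀ *ᵥ v j) = w j ⬝ᵥ (H j *ᵥ (Aᵀ *ᵥ v j)) := by
          rw [← dot_swap]
        rw [this]
        rw [smul_smul, one_div, inv_mul_cancel₀ hδ, one_smul, sub_self]
  -- residual invariant
  have res : ∀ j, 1 ≤ j → j ≤ i → ∀ k, j ≤ k → k ≤ i →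
      v j ⬝ᵥ (A *ᵥ x (k + 1) - b) = 0 := by
    intro j hj1 hji k
    induction k with
    | zero => omega
    | succ k ih =>
      intro hjk hki
      rcases Nat.lt_or_ge j (k + 1) with h | h
      · -- use ih at k, and v j ⬝ᵥ A p (k+1) = 0
        have hprev := ih (by omega) (by omega)
        obtain ⟨hp, _, _, _, hx⟩ := hrec (k + 1) (by omega) hki
        rw [hx]
        have hAp : v j ⬝ᵥ (A *ᵥ p (k + 1)) = 0 := by
          rw [hp, dot_swap, dotProduct_mulVec, vecMul_transpose,
            key j hj1 hji (k + 1) h (by omega), zero_dotProduct]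
        rw [mulVec_sub, mulVec_smul]
        have : A *ᵥ x (k + 1) - ((v (k+1) ⬝ᵥ (A *ᵥ x (k+1) - b)) / (v (k+1) ⬝ᵥ (A *ᵥ p (k+1)))) • (A *ᵥ p (k + 1)) - b
            = (A *ᵥ x (k + 1) - b) - ((v (k+1) ⬝ᵥ (A *ᵥ x (k+1) - b)) / (v (k+1) ⬝ᵥ (A *ᵥ p (k+1)))) • (A *ᵥ p (k + 1)) := by
          abel
        rw [this, dotProduct_sub, hprev, dotProduct_smul, smul_eq_mul, hAp, mul_zero, sub_zero]
      · have hjk' : j = k + 1 := by omega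
        subst hjk'
        obtain ⟨hp, _, hz, _, hx⟩ := hrec (k + 1) hj1 hki
        have hd : v (k+1) ⬝ᵥ (A *ᵥ p (k+1)) = z (k+1) ⬝ᵥ (H (k+1) *ᵥ (Aᵀ *ᵥ v (k+1))) := by
          rw [hp, dot_swap, dotProduct_mulVec, vecMul_transpose, dotProduct_comm]
        rw [hx, mulVec_sub, mulVec_smul]
        have heq : A *ᵥ x (k+1) - ((v (k+1) ⬝ᵥ (A *ᵥ x (k+1) - b)) / (v (k+1) ⬝ᵥ (A *ᵥ p (k+1)))) • (A *ᵥ p (k+1)) - b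
            = (A *ᵥ x (k+1) - b) - ((v (k+1) ⬝ᵥ (A *ᵥ x (k+1) - b)) / (v (k+1) ⬝ᵥ (A *ᵥ p (k+1)))) • (A *ᵥ p (k+1)) := by
          abel
        have hd0 : v (k+1) ⬝ᵥ (A *ᵥ p (k+1)) ≠ 0 := by rw [hd]; exact hz
        rw [heq, dotProduct_sub, dotProduct_smul, smul_eq_mul]
        field_simp
        rw [sub_self, mul_zero]
  intro j hj1 hji
  exact res j hj1 hji i hji le_rfl
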